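/- Let r ≥ 1 and let z = (z₀⁽¹⁾, z₁⁽¹⁾, z₀⁽²⁾, z₀⁽³⁾) ∈ Mat(2r × 4r, ℂ) be written in blocks in Mat(2r × r, ℂ), and assume det(z₀⁽¹⁾ | z₁⁽¹⁾) ≠ 0, det(z₀⁽¹⁾ | z₀⁽²⁾) ≠ 0, det(z₀⁽¹⁾ | z₀⁽³⁾) ≠ 0 and det(z₀⁽²⁾ | z₀⁽³⁾) ≠ 0. Then there exist g ∈ GL(2r, ℂ), h ∈ H_{(2,1,1)}, and x ∈ GL(r, ℂ) such that g · z · h is the 2r×4r matrix with block rows (1_r, 0, 0, 1_r) and (0, x, 1_r, −1_r). -/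

import Mathlib

open Matrix

/-- The `2r × nr` matrix assembled from `n` block columns of size `2r × r`. -/
def ofBlockCols (r n : ℕ) (z : Fin n → Matrix (Fin r ⊕ Fin r) (Fin r) ℂ) :
    Matrix (Fin r ⊕ Fin r) (Fin n × Fin r) ℂ :=
  Matrix.of fun i jk => z jk.1 i jk.2

/-- The `nr × nr` matrix assembled from an `n × n` array of `r × r` blocks. -/
def ofBlockMat (r n : ℕ) (H : Fin n → Fin n → Matrix (Fin r) (Fin r) ℂ) :
    Matrix (Fin n × Fin r) (Fin n × Fin r) ℂ :=
  Matrix.of fun jk lk => H jk.1 lk.1 jk.2 lk.2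

lemma mul_ofBlockCols (r n : ℕ) (g : Matrix (Fin r ⊕ Fin r) (Fin r ⊕ Fin r) ℂ)
    (z : Fin n → Matrix (Fin r ⊕ Fin r) (Fin r) ℂ) :
    g * ofBlockCols r n z = ofBlockCols r n (fun j => g * z j) := by
  ext i ⟨j, k⟩
  simp [ofBlockCols, mul_apply]

lemma ofBlockCols_mul_ofBlockMat (r n : ℕ) (z : Fin n → Matrix (Fin r ⊕ Fin r) (Fin r) ℂ)
    (H : Fin n → Fin n → Matrix (Fin r) (Fin r) ℂ) :
    ofBlockCols r n z * ofBlockMat r n H =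
      ofBlockCols r n (fun j => ∑ i, z i * H i j) := by
  ext i ⟨j, k⟩
  simp only [ofBlockCols, ofBlockMat, mul_apply, Matrix.of_apply, Fintype.sum_prod_type,
    Matrix.sum_apply]

lemma ofBlockCols_congr (r n : ℕ) (z w : Fin n → Matrix (Fin r ⊕ Fin r) (Fin r) ℂ)
    (h : ∀ j, z j = w j) : ofBlockCols r n z = ofBlockCols r n w := by
  simp only [ofBlockCols]; ext i ⟨j, k⟩; rw [Matrix.of_apply, Matrix.of_apply, h j]

lemma fromRows_add {R m₁ m₂ n : Type*} [AddMonoid R] (A₁ : Matrix m₁ n R) (A₂ : Matrix m₂ n R)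
    (B₁ : Matrix m₁ n R) (B₂ : Matrix m₂ n R) :
    fromRows A₁ A₂ + fromRows B₁ B₂ = fromRows (A₁ + B₁) (A₂ + B₂) := by
  ext (i | i) j <;> simp [fromRows_apply_inl, fromRows_apply_inr]

/-- Normal form lemma (form `x₁`) for `(m, N) = (2r, 4r)`, partition `λ = (2,1,1)`:
`z = (z₀⁽¹⁾, z₁⁽¹⁾, z₀⁽²⁾, z₀⁽³⁾)` with the stated nondegeneracy conditions can be
brought, by the action of `GL(2r, ℂ) × H_{(2,1,1)}`, to the normal form with block rows
`(1_r, 0, 0, 1_r)` and `(0, x, 1_r, −1_r)` with `x ∈ GL(r, ℂ)`. -/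
theorem normal_form_partition_211_first (r : ℕ) (hr : 1 ≤ r)
    (z : Fin 4 → Matrix (Fin r ⊕ Fin r) (Fin r) ℂ)
    (h01 : (fromCols (z 0) (z 1)).det ≠ 0)
    (h02 : (fromCols (z 0) (z 2)).det ≠ 0)
    (h03 : (fromCols (z 0) (z 3)).det ≠ 0)
    (h23 : (fromCols (z 2) (z 3)).det ≠ 0) :
    ∃ (g : GL (Fin r ⊕ Fin r) ℂ) (h₀ k l : GL (Fin r) ℂ)
      (h₁ : Matrix (Fin r) (Fin r) ℂ) (x : GL (Fin r) ℂ),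
      (g : Matrix (Fin r ⊕ Fin r) (Fin r ⊕ Fin r) ℂ) * ofBlockCols r 4 z *
          ofBlockMat r 4
            ![![(h₀ : Matrix (Fin r) (Fin r) ℂ), h₁, 0, 0],
              ![0, (h₀ : Matrix (Fin r) (Fin r) ℂ), 0, 0],
              ![0, 0, (k : Matrix (Fin r) (Fin r) ℂ), 0],
              ![0, 0, 0, (l : Matrix (Fin r) (Fin r) ℂ)]] =
        ofBlockCols r 4
          ![fromRows 1 0, fromRows 0 (x : Matrix (Fin r) (Fin r) ℂ),
            fromRows 0 1, fromRows 1 (-1)] := by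
  classical
  set Z02 := fromCols (z 0) (z 2) with hZ02
  have hZu : IsUnit Z02.det := isUnit_iff_ne_zero.mpr h02
  set g0 := Z02⁻¹ with hg0def
  have hg0Z : g0 * Z02 = 1 := nonsing_inv_mul _ hZu
  have hZg0 : Z02 * g0 = 1 := mul_nonsing_inv _ hZu
  have hg0det : g0.det ≠ 0 := by
    rw [hg0def, det_nonsing_inv, Ring.inverse_eq_inv]
    exact inv_ne_zero h02
  -- identify g0 * z 0 and g0 * z 2
  have hcols : fromCols (g0 * z 0) (g0 * z 2) = fromCols (fromRows 1 0) (fromRows 0 1) := by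
    rw [← mul_fromCols, ← hZ02, hg0Z, fromCols_fromRows_eq_fromBlocks, fromBlocks_one]
  have hz0 : g0 * z 0 = fromRows 1 0 := (fromCols_inj.eq_iff.mp hcols).1
  have hz2 : g0 * z 2 = fromRows 0 1 := (fromCols_inj.eq_iff.mp hcols).2
  set p := toRows₁ (g0 * z 3) with hp'
  set q := toRows₂ (g0 * z 3) with hq'
  set u := toRows₁ (g0 * z 1) with hu'
  set v := toRows₂ (g0 * z 1) with hv'
  have hz3 : g0 * z 3 = fromRows p q := (fromRows_toRows _).symm
  have hz1 : g0 * z 1 = fromRows u v := (fromRows_toRows _).symm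
  -- det q ≠ 0
  have hq0 : q.det ≠ 0 := by
    have h1 : (g0 * fromCols (z 0) (z 3)).det ≠ 0 := by
      rw [det_mul]; exact mul_ne_zero hg0det h03
    rw [mul_fromCols, hz0, hz3, fromCols_fromRows_eq_fromBlocks,
      det_fromBlocks_zero₂₁, det_one, one_mul] at h1
    exact h1
  -- det v ≠ 0
  have hv0 : v.det ≠ 0 := by
    have h1 : (g0 * fromCols (z 0) (z 1)).det ≠ 0 := by
      rw [det_mul]; exact mul_ne_zero hg0det h01
    rw [mul_fromCols, hz0, hz1, fromCols_fromRows_eq_fromBlocks,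
      det_fromBlocks_zero₂₁, det_one, one_mul] at h1
    exact h1
  -- det p ≠ 0
  have hp0 : p.det ≠ 0 := by
    have h1 : (g0 * fromCols (z 2) (z 3)).det ≠ 0 := by
      rw [det_mul]; exact mul_ne_zero hg0det h23
    rw [mul_fromCols, hz2, hz3, fromCols_fromRows_eq_fromBlocks] at h1
    set S : Matrix (Fin r ⊕ Fin r) (Fin r ⊕ Fin r) ℂ :=
      fromBlocks 0 (1 : Matrix (Fin r) (Fin r) ℂ) (1 : Matrix (Fin r) (Fin r) ℂ) 0 with hS'
    have hfact : (fromBlocks (0 : Matrix (Fin r) (Fin r) ℂ) p 1 q) =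
        S * fromBlocks 1 q 0 p := by
      rw [hS', fromBlocks_multiply]; simp
    have hS : S.det ≠ 0 := by
      intro h
      have h2 : (S * S).det = 0 := by rw [det_mul, h, zero_mul]
      rw [hS', fromBlocks_multiply] at h2
      simp [fromBlocks_one] at h2
    rw [hfact, det_mul, det_fromBlocks_zero₂₁, det_one, one_mul] at h1
    exact fun h => h1 (by rw [h, mul_zero])
  have hqu : IsUnit q.det := isUnit_iff_ne_zero.mpr hq0
  have hpu : IsUnit p.det := isUnit_iff_ne_zero.mpr hp0
  have hvu : IsUnit v.det := isUnit_iff_ne_zero.mpr hv0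
  set b : Matrix (Fin r) (Fin r) ℂ := -(p * q⁻¹) with hb'
  set bi : Matrix (Fin r) (Fin r) ℂ := -(q * p⁻¹) with hbi'
  have hbbi : b * bi = 1 := by
    rw [hb', hbi', neg_mul_neg, mul_assoc, ← mul_assoc q⁻¹, nonsing_inv_mul _ hqu, one_mul,
      mul_nonsing_inv _ hpu]
  have hbib : bi * b = 1 := by
    rw [hb', hbi', neg_mul_neg, mul_assoc, ← mul_assoc p⁻¹, nonsing_inv_mul _ hpu, one_mul,
      mul_nonsing_inv _ hqu]
  set D : Matrix (Fin r ⊕ Fin r) (Fin r ⊕ Fin r) ℂ := fromBlocks 1 0 0 b with hD'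
  set Di : Matrix (Fin r ⊕ Fin r) (Fin r ⊕ Fin r) ℂ := fromBlocks 1 0 0 bi with hDi'
  have hDDi : D * Di = 1 := by
    rw [hD', hDi', fromBlocks_multiply]; simp [hbbi, fromBlocks_one]
  have hDiD : Di * D = 1 := by
    rw [hD', hDi', fromBlocks_multiply]; simp [hbib, fromBlocks_one]
  -- the group elements
  refine ⟨⟨D * g0, Z02 * Di, ?_, ?_⟩, 1, ⟨bi, b, hbib, hbbi⟩, ⟨p⁻¹, p, nonsing_inv_mul _ hpu,
      mul_nonsing_inv _ hpu⟩, -u, ⟨b * v, v⁻¹ * bi, ?_, ?_⟩, ?_⟩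
  · rw [mul_assoc, ← mul_assoc g0, hg0Z, one_mul, hDDi]
  · rw [mul_assoc, ← mul_assoc Di, hDiD, one_mul, hZg0]
  · rw [mul_assoc, ← mul_assoc v, mul_nonsing_inv _ hvu, one_mul, hbbi]
  · rw [mul_assoc, ← mul_assoc bi, hbib, one_mul, nonsing_inv_mul _ hvu]
  · rw [mul_ofBlockCols, ofBlockCols_mul_ofBlockMat]
    refine ofBlockCols_congr _ _ _ _ (fun j => ?_)
    fin_cases j
    · show (∑ i, (D * g0) * z i * _) = fromRows 1 0
      rw [Fin.sum_univ_four]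
      simp only [Fin.zero_eta, Fin.mk_one, Fin.reduceFinMk, Matrix.cons_val_zero,
        Matrix.cons_val_one, Matrix.head_cons, Matrix.cons_val_two, Matrix.cons_val_three,
        Matrix.tail_cons, Units.val_one, mul_zero, add_zero, mul_one]
      rw [Matrix.mul_assoc D g0 (z 0), hz0, hD', fromBlocks_mul_fromRows]
      simp
    · show (∑ i, (D * g0) * z i * _) = fromRows 0 (b * v)
      rw [Fin.sum_univ_four]
      simp only [Fin.zero_eta, Fin.mk_one, Fin.reduceFinMk, Matrix.cons_val_zero,
        Matrix.cons_val_one, Matrix.head_cons, Matrix.cons_val_two, Matrix.cons_val_three,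
        Matrix.tail_cons, Units.val_one, mul_zero, add_zero, mul_one]
      rw [Matrix.mul_assoc D g0 (z 0), hz0, Matrix.mul_assoc D g0 (z 1), hz1, hD',
        fromBlocks_mul_fromRows, fromBlocks_mul_fromRows, fromRows_mul, fromRows_mul,
        fromRows_add]
      simp
    · show (∑ i, (D * g0) * z i * _) = fromRows 0 1
      rw [Fin.sum_univ_four]
      simp only [Fin.zero_eta, Fin.mk_one, Fin.reduceFinMk, Matrix.cons_val_zero,
        Matrix.cons_val_one, Matrix.head_cons, Matrix.cons_val_two, Matrix.cons_val_three,
        Matrix.tail_cons, Units.val_one, mul_zero, add_zero, zero_add, mul_one]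
      rw [Matrix.mul_assoc D g0 (z 2), hz2, hD', fromBlocks_mul_fromRows, fromRows_mul]
      simp [hbbi]
    · show (∑ i, (D * g0) * z i * _) = fromRows 1 (-1)
      rw [Fin.sum_univ_four]
      simp only [Fin.zero_eta, Fin.mk_one, Fin.reduceFinMk, Matrix.cons_val_zero,
        Matrix.cons_val_one, Matrix.head_cons, Matrix.cons_val_two, Matrix.cons_val_three,
        Matrix.tail_cons, Units.val_one, mul_zero, add_zero, zero_add, mul_one]
      rw [Matrix.mul_assoc D g0 (z 3), hz3, hD', fromBlocks_mul_fromRows, fromRows_mul]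
      have h1 : p * p⁻¹ = 1 := mul_nonsing_inv _ hpu
      have h2 : b * q * p⁻¹ = -1 := by
        rw [hb', neg_mul, neg_mul, mul_assoc, mul_assoc, ← mul_assoc q⁻¹, nonsing_inv_mul _ hqu,
          one_mul, h1]
      simp only [one_mul, zero_mul, add_zero, zero_add, Matrix.mul_zero, Matrix.zero_mul,
        Matrix.one_mul, h1, h2]
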